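/- Let X be a real Hilbert space, α > 0, A : X ≃L[ℝ] X a self-adjoint continuous linear equivalence with ⟪-A φ, φ⟫ ≥ α‖φ‖² for all φ ∈ X, and B : X →L[ℝ] X a continuous linear operator such that ⟪B(A⁻¹ Φ), -A⁻¹ Φ⟫ ≥ 0 for every Φ ∈ X. Then for every t ≥ 0 and every w₀ ∈ X: ‖A (exp(-t (A⁻¹ ∘ B)) w₀)‖ ≤ ‖A‖ · √(‖A⁻¹‖ / α) · ‖A w₀‖. -/

import Mathlib

open RealInnerProductSpace

theorem h2_stability_sobolev_abstract
    {X : Type*} [NormedAddCommGroup X] [InnerProductSpace ℝ X] [CompleteSpace X]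
    (α : ℝ) (hα : 0 < α) (A : X ≃L[ℝ] X)
    (hAsa : ∀ φ ψ : X, ⟪A φ, ψ⟫ = ⟪φ, A ψ⟫)
    (hAneg : ∀ φ : X, α * ‖φ‖ ^ 2 ≤ ⟪-(A φ), φ⟫)
    (B : X →L[ℝ] X)
    (hdiss : ∀ Φ : X, 0 ≤ ⟪B (A.symm Φ), -(A.symm Φ)⟫)
    (t : ℝ) (ht : 0 ≤ t) (w₀ : X) :
    ‖A (NormedSpace.exp (-(t • ((A.symm : X →L[ℝ] X).comp B))) w₀)‖ ≤
      ‖(A : X →L[ℝ] X)‖ * Real.sqrt (‖(A.symm : X →L[ℝ] X)‖ / α) * ‖A w₀‖ := by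
  set L : X →L[ℝ] X := (A.symm : X →L[ℝ] X).comp B with hL
  set w : ℝ → X := fun s => NormedSpace.exp (-(s • L)) w₀ with hw
  have hBneg : ∀ v : X, ⟪B v, v⟫ ≤ 0 := by
    intro v
    have h := hdiss (A v)
    simp only [ContinuousLinearEquiv.symm_apply_apply, inner_neg_right] at h
    linarith
  -- derivative of w
  have hwderiv : ∀ s : ℝ, HasDerivAt w (-(L (w s))) s := by
    intro s
    have h1 : HasDerivAt (fun u : ℝ => NormedSpace.exp (u • (-L)))
        ((-L) * NormedSpace.exp (s • (-L))) s := hasDerivAt_exp_smul_const' (-L) s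
    have h2 := h1.clm_apply (hasDerivAt_const s w₀)
    simp only [smul_neg] at h2
    simpa using h2
  set f : ℝ → ℝ := fun s => ⟪-(A (w s)), w s⟫ with hf
  have hfderiv : ∀ s : ℝ, HasDerivAt f (2 * ⟪B (w s), w s⟫) s := by
    intro s
    have hAw : HasDerivAt (fun u => A (w u)) ((A : X →L[ℝ] X) (-(L (w s)))) s :=
      (A : X →L[ℝ] X).hasFDerivAt.comp_hasDerivAt s (hwderiv s)
    have hAw' : HasDerivAt (fun u => -(A (w u))) (-((A : X →L[ℝ] X) (-(L (w s))))) s := hAw.neg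
    have h := hAw'.inner ℝ (hwderiv s)
    have hALv : ∀ v : X, A (L v) = B v := by
      intro v
      simp [hL, ContinuousLinearEquiv.apply_symm_apply]
    have e1 : ⟪-(A (w s)), -(L (w s))⟫ = ⟪B (w s), w s⟫ := by
      rw [inner_neg_neg, hAsa]
      rw [hALv (w s)]
      exact real_inner_comm _ _
    have e2 : ⟪-((A : X →L[ℝ] X) (-(L (w s)))), w s⟫ = ⟪B (w s), w s⟫ := by
      have : -((A : X →L[ℝ] X) (-(L (w s)))) = B (w s) := by
        simp only [map_neg, neg_neg, ContinuousLinearEquiv.coe_coe]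
        exact hALv (w s)
      rw [this]
    have : ⟪-(A (w s)), -(L (w s))⟫ + ⟪-((A : X →L[ℝ] X) (-(L (w s)))), w s⟫
        = 2 * ⟪B (w s), w s⟫ := by
      rw [e1, e2]; ring
    rw [this] at h
    exact h
  have hanti : Antitone f := by
    apply antitone_of_deriv_nonpos
    · exact fun s => (hfderiv s).differentiableAt
    · intro s
      rw [(hfderiv s).deriv]
      have := hBneg (w s)
      linarith
  have hf0 : f 0 = ⟪-(A w₀), w₀⟫ := by
    simp [hf, hw]
  have key : α * ‖w t‖ ^ 2 ≤ ‖(A.symm : X →L[ℝ] X)‖ * ‖A w₀‖ ^ 2 := by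
    have h1 : α * ‖w t‖ ^ 2 ≤ f t := hAneg (w t)
    have h2 : f t ≤ f 0 := hanti ht
    have h3 : f 0 ≤ ‖A w₀‖ * ‖w₀‖ := by
      rw [hf0, inner_neg_left]
      have := abs_real_inner_le_norm (A w₀) w₀
      have h := neg_abs_le ⟪(A w₀ : X), w₀⟫
      linarith [neg_le_abs ⟪(A w₀ : X), w₀⟫]
    have h4 : ‖w₀‖ ≤ ‖(A.symm : X →L[ℝ] X)‖ * ‖A w₀‖ := by
      have : w₀ = A.symm (A w₀) := (A.symm_apply_apply w₀).symm
      calc ‖w₀‖ = ‖(A.symm : X →L[ℝ] X) (A w₀)‖ := by simp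
        _ ≤ ‖(A.symm : X →L[ℝ] X)‖ * ‖A w₀‖ := (A.symm : X →L[ℝ] X).le_opNorm _
    have h5 : ‖A w₀‖ * ‖w₀‖ ≤ ‖(A.symm : X →L[ℝ] X)‖ * ‖A w₀‖ ^ 2 := by
      have := mul_le_mul_of_nonneg_left h4 (norm_nonneg (A w₀))
      nlinarith [norm_nonneg (A w₀)]
    linarith
  have hwt : ‖w t‖ ≤ Real.sqrt (‖(A.symm : X →L[ℝ] X)‖ / α) * ‖A w₀‖ := by
    have h1 : ‖w t‖ ^ 2 ≤ (‖(A.symm : X →L[ℝ] X)‖ / α) * ‖A w₀‖ ^ 2 := by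
      rw [div_mul_eq_mul_div, le_div_iff₀ hα]
      nlinarith [key]
    have h2 := Real.sqrt_le_sqrt h1
    rw [Real.sqrt_sq (norm_nonneg _), Real.sqrt_mul (by positivity) ,
      Real.sqrt_sq (norm_nonneg _)] at h2
    exact h2
  have hgoal : NormedSpace.exp (-(t • ((A.symm : X →L[ℝ] X).comp B))) w₀ = w t := by
    rfl
  rw [hgoal]
  calc ‖A (w t)‖ ≤ ‖(A : X →L[ℝ] X)‖ * ‖w t‖ := (A : X →L[ℝ] X).le_opNorm _
    _ ≤ ‖(A : X →L[ℝ] X)‖ * (Real.sqrt (‖(A.symm : X →L[ℝ] X)‖ / α) * ‖A w₀‖) :=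
        mul_le_mul_of_nonneg_left hwt (norm_nonneg _)
    _ = _ := by ring
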